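/- Let k ≥ 3 be an odd integer. Both P ∪ {e_1, e_2} and Q ∪ {e_1, e_2} are circuit-hyperplanes of the matroid N_k^L. -/

import Mathlib

open Set

namespace Matroid

variable {α : Type}

/-- Deletion of a set from a matroid. -/
def delete' (M : Matroid α) (D : Set α) : Matroid α := M ↾ (M.E \ D)

/-- Contraction of a set in a matroid. -/
def contract' (M : Matroid α) (C : Set α) : Matroid α := (M✶.delete' C)✶

/-- A circuit: a minimal dependent set. -/
def IsCircuit' (M : Matroid α) (C : Set α) : Prop :=
  M.Dep C ∧ ∀ D, D ⊂ C → M.Indep D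

/-- A cocircuit: a circuit of the dual. -/
def IsCocircuit' (M : Matroid α) (C : Set α) : Prop := M✶.IsCircuit' C

/-- A hyperplane: a flat whose rank is one less than the rank of the matroid. -/
def IsHyperplane (M : Matroid α) (H : Set α) : Prop :=
  M.IsFlat H ∧ ∃ I B, M.IsBasis I H ∧ M.IsBase B ∧ I.encard + 1 = B.encard

/-- A circuit-hyperplane: a set that is both a circuit and a hyperplane. -/
def IsCircuitHyperplane (M : Matroid α) (C : Set α) : Prop :=
  M.IsCircuit' C ∧ M.IsHyperplane C

/-- A free basis: a basis `B` such that `B ∪ {e}` is a circuit for every `e ∈ E(M) - B`. -/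
def IsFreeBase (M : Matroid α) (B : Set α) : Prop :=
  M.IsBase B ∧ ∀ e ∈ M.E \ B, M.IsCircuit' (insert e B)

/-- A connected matroid: the ground set is nonempty and every two distinct elements of the
ground set lie in a common circuit. -/
def IsConnected (M : Matroid α) : Prop :=
  M.E.Nonempty ∧ ∀ x ∈ M.E, ∀ y ∈ M.E, x ≠ y → ∃ C, M.IsCircuit' C ∧ x ∈ C ∧ y ∈ C

/-- `M` is a frame matroid: there is a matroid `M'` whose ground set is the union of (a copy of)
`E(M)` and a set `V` disjoint from it, such that `V` is a basis of `M'`, deleting `V` from `M'`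
yields (the copy of) `M`, and for every `e ∈ E(M)` the unique circuit of `M'` contained in
`V ∪ {e}` has at most three elements. -/
def IsFrame (M : Matroid α) : Prop :=
  ∃ (β : Type) (M' : Matroid (α ⊕ β)) (V : Set (α ⊕ β)),
    M'.Finite ∧
    M'.E = (Sum.inl '' M.E) ∪ V ∧
    Disjoint (Sum.inl '' M.E) V ∧
    M'.IsBase V ∧
    M'.delete' V = M.map Sum.inl Sum.inl_injective.injOn ∧
    ∀ e ∈ M.E, ∃ C, M'.IsCircuit' C ∧ C ⊆ insert (Sum.inl e) V ∧ C.encard ≤ 3 ∧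
      ∀ C', M'.IsCircuit' C' → C' ⊆ insert (Sum.inl e) V → C' = C

/-- `N` is a graphic matroid: there are a set `W` of vertices and an assignment of an unordered
pair of vertices to each element of the ground set, such that a subset `I` of the ground set is
independent exactly when every nonempty `J ⊆ I` uses strictly more vertices than it has edges
(i.e. the associated multigraph is a forest). -/
def IsGraphic (N : Matroid α) : Prop :=
  ∃ (W : Type) (f : α → Sym2 W),
    ∀ I : Set α, N.Indep I ↔ (I ⊆ N.E ∧ ∀ J ⊆ I, J.Nonempty →
      J.encard < {w : W | ∃ e ∈ J, w ∈ f e}.encard)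

/-- `M` is a lifted-graphic matroid: there is a matroid `M'` whose ground set is (a copy of)
`E(M)` plus one extra element `f`, such that `M' \ f = M` and `M' / f` is graphic. -/
def IsLiftedGraphic (M : Matroid α) : Prop :=
  ∃ M' : Matroid (α ⊕ Unit),
    M'.Finite ∧
    M'.E = (Sum.inl '' M.E) ∪ {Sum.inr ()} ∧
    M'.delete' {Sum.inr ()} = M.map Sum.inl Sum.inl_injective.injOn ∧
    (M'.contract' {Sum.inr ()}).IsGraphic

/-- `M` and `N` are isomorphic matroids. -/
def Iso' {β : Type} (M : Matroid α) (N : Matroid β) : Prop :=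
  ∃ (f : α → β) (hf : Set.InjOn f M.E), M.map f hf = N

end Matroid

section Graphs

/-- The edges of the graph `G_k`: `a i`, `b i`, `c i`, `d i` for `i : Fin k`
(with `i` representing the index `i+1` of the paper), together with `e1` and `e2`. -/
inductive Edge (k : ℕ) : Type where
  | a : Fin k → Edge k
  | b : Fin k → Edge k
  | c : Fin k → Edge k
  | d : Fin k → Edge k
  | e1 : Edge k
  | e2 : Edge k
deriving DecidableEq

/-- The vertices of `G_k`: `Sum.inl (i, false)` is `x_{i+1}` (so `Sum.inl (0, false)` is `s_1`),
`Sum.inl (i, true)` is `y_{i+1}` (so `Sum.inl (0, true)` is `s_2`), `Sum.inr false` is `t_1` and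
`Sum.inr true` is `t_2`.  There are `2k+2` vertices in all. -/
abbrev Vertex (k : ℕ) := (Fin k × Bool) ⊕ Bool

variable {k : ℕ}

/-- The tail of each edge of `G_k`. -/
def Edge.tail [NeZero k] : Edge k → Vertex k
  | .a i => .inl (i, false)
  | .b i => .inl (i, false)
  | .c i => .inl (i, true)
  | .d i => .inl (i, true)
  | .e1 => .inl (0, false)
  | .e2 => .inl (0, true)

/-- The head of each edge of `G_k`; the head `x_1` is the vertex `t_1 = Sum.inr false` and
the head `y_1` is the vertex `t_2 = Sum.inr true`. -/
def Edge.head [NeZero k] : Edge k → Vertex k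
  | .a i => if i + 1 = 0 then .inr false else .inl (i + 1, false)
  | .b i => if i + 1 = 0 then .inr true else .inl (i + 1, true)
  | .c i => if i + 1 = 0 then .inr false else .inl (i + 1, false)
  | .d i => if i + 1 = 0 then .inr true else .inl (i + 1, true)
  | .e1 => .inr false
  | .e2 => .inr true

/-- The set `P = {a_1, …, a_k, d_1, …, d_k}`. -/
def Pset (k : ℕ) : Set (Edge k) := {e | ∃ i, e = .a i ∨ e = .d i}

/-- The set `Q = {b_1, …, b_k, c_1, …, c_k}`. -/
def Qset (k : ℕ) : Set (Edge k) := {e | ∃ i, e = .b i ∨ e = .c i}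

/-- The last index of `Fin k`, representing the paper's index `k`. -/
def lastIdx (k : ℕ) [NeZero k] : Fin k :=
  ⟨k - 1, Nat.sub_lt (Nat.pos_of_ne_zero (NeZero.ne k)) Nat.one_pos⟩

/-- The group labels for the frame construction: `γ(a_k) = γ(b_k) = γ(c_k) = γ(d_k) = 2` and
`γ(e) = 1` for every other edge. -/
def gammaF [NeZero k] : Edge k → ℝ
  | .a i => if i = lastIdx k then 2 else 1
  | .b i => if i = lastIdx k then 2 else 1
  | .c i => if i = lastIdx k then 2 else 1
  | .d i => if i = lastIdx k then 2 else 1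
  | .e1 => 1
  | .e2 => 1

/-- The matrix `A_k` of the frame construction, with rows indexed by the vertices of `G_k` and
columns by its edges: the column of an edge `e` has entry `1` in the row of the tail of `e`,
entry `-γ(e)` in the row of the head of `e`, and `0` elsewhere. -/
def frameMatrix (k : ℕ) [NeZero k] : Matrix (Vertex k) (Edge k) ℝ :=
  fun v e => if v = e.tail then 1 else if v = e.head then -gammaF e else 0

/-- The group labels for the lifted construction: `γ(a_i) = γ(d_i) = 1` for all `i` and
`γ(e) = 0` for every other edge. -/
def gammaL : Edge k → ℝ
  | .a _ => 1
  | .d _ => 1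
  | _ => 0

/-- The matrix `A_k^L` of the lifted construction, with rows indexed by the vertices of `G_k`
together with one additional row: the column of an edge `e` has entry `1` in the row of the tail
of `e`, entry `-1` in the row of the head of `e`, entry `γ(e)` in the additional row, and `0`
elsewhere. -/
def liftMatrix (k : ℕ) [NeZero k] : Matrix (Vertex k ⊕ Unit) (Edge k) ℝ :=
  fun v e => match v with
  | .inl v => if v = e.tail then 1 else if v = e.head then -1 else 0
  | .inr _ => gammaL e

/-- `N` is the matroid on the column index set of the matrix `A` in which a set is independent
if and only if the corresponding columns of `A` are linearly independent over `ℝ`. -/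
def IsColMatroid {m n : Type} (A : Matrix m n ℝ) (N : Matroid n) : Prop :=
  N.E = Set.univ ∧
  ∀ I : Set n, N.Indep I ↔ LinearIndependent ℝ (fun e : I => fun v : m => A v (e : n))

/-- The vertex of the contracted graph `G_k / {e_1, e_2}` corresponding to a vertex of `G_k`:
`t_1` is identified with `s_1` and `t_2` with `s_2`, leaving the `2k` vertices `Fin k × Bool`. -/
def contractVertex [NeZero k] : Vertex k → Fin k × Bool
  | .inl p => p
  | .inr b => (0, b)

/-- The tail, in `G_k / {e_1, e_2}`, of an edge. -/
def Edge.ctail [NeZero k] (e : Edge k) : Fin k × Bool := contractVertex e.tail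

/-- The head, in `G_k / {e_1, e_2}`, of an edge. -/
def Edge.chead [NeZero k] (e : Edge k) : Fin k × Bool := contractVertex e.head

/-- `v` is a vertex of the subgraph of `G_k / {e_1, e_2}` formed by the edge set `S`. -/
def Touches [NeZero k] (S : Set (Edge k)) (v : Fin k × Bool) : Prop :=
  ∃ e ∈ S, e.ctail = v ∨ e.chead = v

/-- The degree of the vertex `v` in the subgraph of `G_k / {e_1, e_2}` with edge set `S`. -/
noncomputable def degreeIn [NeZero k] (S : Set (Edge k)) (v : Fin k × Bool) : ℕ :=
  {e ∈ S | e.ctail = v}.ncard + {e ∈ S | e.chead = v}.ncard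

/-- The edge set `S` forms a cycle of the multigraph `G_k / {e_1, e_2}`: the subgraph it
spans is connected and `2`-regular. -/
def IsCycleIn [NeZero k] (S : Set (Edge k)) : Prop :=
  S.Nonempty ∧ Edge.e1 ∉ S ∧ Edge.e2 ∉ S ∧
  (∀ v, Touches S v → degreeIn S v = 2) ∧
  (∀ T ⊆ S, T.Nonempty → (S \ T).Nonempty → ∃ v, Touches T v ∧ Touches (S \ T) v)

/-- The star `δ_G(v)` of a vertex `v` of the contracted graph `G_k / {e_1, e_2}`:
all edges of that graph incident with `v`. -/
def contractStar (k : ℕ) [NeZero k] (v : Fin k × Bool) : Set (Edge k) :=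
  {e | e ≠ .e1 ∧ e ≠ .e2 ∧ (e.ctail = v ∨ e.chead = v)}

/-- The star `δ(v)` of a vertex `v` of the graph `G_k`: all edges of `G_k` incident with `v`. -/
def star (k : ℕ) [NeZero k] (v : Vertex k) : Set (Edge k) :=
  {e | e.tail = v ∨ e.head = v}

end Graphs

section MyAux

open Edge

variable {k : ℕ} [NeZero k]

def edgeEquiv (k : ℕ) : Edge k ≃ ((Fin k ⊕ Fin k) ⊕ (Fin k ⊕ Fin k) ⊕ Bool) where
  toFun e := match e with
    | .a i => .inl (.inl i)
    | .b i => .inl (.inr i)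
    | .c i => .inr (.inl (.inl i))
    | .d i => .inr (.inl (.inr i))
    | .e1 => .inr (.inr false)
    | .e2 => .inr (.inr true)
  invFun x := match x with
    | .inl (.inl i) => .a i
    | .inl (.inr i) => .b i
    | .inr (.inl (.inl i)) => .c i
    | .inr (.inl (.inr i)) => .d i
    | .inr (.inr false) => .e1
    | .inr (.inr true) => .e2
  left_inv e := by cases e <;> rfl
  right_inv x := by rcases x with (i | i) | ((i | i) | (_ | _)) <;> rfl

instance : Fintype (Edge k) := Fintype.ofEquiv _ (edgeEquiv k).symm

lemma sum_edge {M : Type} [AddCommMonoid M] (f : Edge k → M) :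
    ∑ e : Edge k, f e = ((∑ j, f (.a j)) + (∑ j, f (.b j)))
      + (((∑ j, f (.c j)) + (∑ j, f (.d j))) + (f .e2 + f .e1)) := by
  rw [← Equiv.sum_comp (edgeEquiv k).symm f]
  simp only [Fintype.sum_sum_type, Fintype.sum_bool]
  rfl

lemma fin_val_one (hk : 3 ≤ k) : (1 : Fin k).val = 1 := by
  rw [Fin.val_one']; exact Nat.mod_eq_of_lt (by omega)

lemma fin_one_ne_zero (hk : 3 ≤ k) : (1 : Fin k) ≠ 0 := by
  intro h
  have h1 := congrArg Fin.val h
  rw [fin_val_one hk, Fin.val_zero] at h1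
  omega

lemma fin_mk_add_one (hk : 3 ≤ k) {n : ℕ} (h1 : n < k) (h2 : n + 1 < k) :
    (⟨n, h1⟩ : Fin k) + 1 = ⟨n + 1, h2⟩ := by
  apply Fin.ext
  rw [Fin.val_add, fin_val_one hk]
  exact Nat.mod_eq_of_lt h2

lemma fin_mk_zero' (h : 0 < k) : (⟨0, h⟩ : Fin k) = 0 := by
  apply Fin.ext
  rw [Fin.val_zero]

lemma fin_last_add_one (hk : 3 ≤ k) : lastIdx k + 1 = 0 := by
  apply Fin.ext
  rw [Fin.val_add, fin_val_one hk, Fin.val_zero]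
  show (k - 1 + 1) % k = 0
  rw [Nat.sub_add_cancel (by omega)]
  exact Nat.mod_self k

lemma fin_add_one_eq_zero_iff (hk : 3 ≤ k) {i : Fin k} : i + 1 = 0 ↔ i = lastIdx k := by
  constructor
  · intro h
    exact add_right_cancel (h.trans (fin_last_add_one hk).symm)
  · rintro rfl
    exact fin_last_add_one hk

lemma fin_mk_succ_ne_zero (hk : 3 ≤ k) {n : ℕ} (h2 : n + 1 < k) :
    (⟨n + 1, h2⟩ : Fin k) ≠ 0 := by
  intro h
  have h1 := congrArg Fin.val h
  simp only [Fin.val_zero] at h1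
  omega

lemma fin_sub_one_mk (hk : 3 ≤ k) {n : ℕ} (h1 : n < k) (h2 : n + 1 < k) :
    (⟨n + 1, h2⟩ : Fin k) - 1 = ⟨n, h1⟩ := by
  rw [← fin_mk_add_one hk h1 h2, add_sub_cancel_right]

lemma sum_if_shift (hk : 3 ≤ k) (g : Fin k → ℝ) (i : Fin k) :
    ∑ j : Fin k, (if j + 1 = 0 then (0:ℝ) else if i = j + 1 then g j else 0)
      = if i = 0 then 0 else g (i - 1) := by
  classical
  by_cases hi : i = 0
  · subst hi
    rw [if_pos rfl]
    apply Finset.sum_eq_zero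
    intro j _
    by_cases h : j + 1 = 0
    · rw [if_pos h]
    · rw [if_neg h, if_neg (fun hh => h hh.symm)]
  · rw [if_neg hi, Finset.sum_eq_single (i - 1)]
    · have h1 : (i - 1) + 1 = i := sub_add_cancel i 1
      rw [if_neg (by rw [h1]; exact hi), if_pos h1.symm]
    · intro j _ hj
      by_cases h : j + 1 = 0
      · rw [if_pos h]
      · rw [if_neg h, if_neg (fun hij => hj (eq_sub_of_add_eq hij.symm))]
    · intro h; exact absurd (Finset.mem_univ _) h

lemma sum_if_last (hk : 3 ≤ k) (g : Fin k → ℝ) :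
    ∑ j : Fin k, (if j + 1 = 0 then g j else 0) = g (lastIdx k) := by
  classical
  have h : ∀ j : Fin k, (if j + 1 = 0 then g j else 0) = (if j = lastIdx k then g j else 0) := by
    intro j
    by_cases hj : j = lastIdx k
    · rw [if_pos hj, if_pos ((fin_add_one_eq_zero_iff hk).mpr hj)]
    · rw [if_neg hj, if_neg (fun hh => hj ((fin_add_one_eq_zero_iff hk).mp hh))]
  rw [Finset.sum_congr rfl (fun j _ => h j), Finset.sum_ite_eq' Finset.univ,
    if_pos (Finset.mem_univ _)]

lemma sum_pred (hk : 3 ≤ k) (g : Fin k → ℝ) :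
    ∑ i : Fin k, (if i = 0 then (0:ℝ) else g (i - 1)) = (∑ j, g j) - g (lastIdx k) := by
  classical
  rw [← Equiv.sum_comp (Equiv.addRight (1 : Fin k)) (fun i => if i = 0 then (0:ℝ) else g (i - 1))]
  have h1 : ∀ i : Fin k, (if (Equiv.addRight (1 : Fin k)) i = 0 then (0:ℝ)
      else g ((Equiv.addRight (1 : Fin k)) i - 1)) = if i = lastIdx k then 0 else g i := by
    intro i
    show (if i + 1 = 0 then (0:ℝ) else g (i + 1 - 1)) = _
    rw [add_sub_cancel_right]
    by_cases h : i = lastIdx k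
    · rw [if_pos ((fin_add_one_eq_zero_iff hk).mpr h), if_pos h]
    · rw [if_neg (fun hh => h ((fin_add_one_eq_zero_iff hk).mp hh)), if_neg h]
  rw [Finset.sum_congr rfl (fun i _ => h1 i)]
  have h2 : ∀ i : Fin k, (if i = lastIdx k then (0:ℝ) else g i)
      + (if i = lastIdx k then g i else 0) = g i := by
    intro i; by_cases h : i = lastIdx k <;> simp [h]
  have h3 : (∑ i : Fin k, (if i = lastIdx k then (0:ℝ) else g i))
      + (∑ i : Fin k, (if i = lastIdx k then g i else 0)) = ∑ j, g j := by
    rw [← Finset.sum_add_distrib]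
    exact Finset.sum_congr rfl (fun i _ => h2 i)
  rw [Finset.sum_ite_eq' Finset.univ, if_pos (Finset.mem_univ _)] at h3
  linarith

end MyAux
section MyRows

open Edge

variable {k : ℕ} [NeZero k]

lemma rowX (hk : 3 ≤ k) (c : Edge k → ℝ) (i : Fin k) :
    ∑ e : Edge k, c e * liftMatrix k (Sum.inl (Sum.inl (i, false))) e
    = c (.a i) + c (.b i) + (if i = 0 then c .e1 else 0)
      - (if i = 0 then 0 else c (.a (i - 1)) + c (.c (i - 1))) := by
  classical
  rw [sum_edge (fun e => c e * liftMatrix k (Sum.inl (Sum.inl (i, false))) e)]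
  have hA : ∀ j : Fin k, c (.a j) * liftMatrix k (Sum.inl (Sum.inl (i, false))) (.a j)
      = (if j = i then c (.a j) else 0)
        + (if j + 1 = 0 then 0 else if i = j + 1 then -c (.a j) else 0) := by
    intro j
    show c (.a j) * (if (Sum.inl (i, false) : Vertex k) = (Edge.a j).tail then 1
        else if (Sum.inl (i, false) : Vertex k) = (Edge.a j).head then -1 else 0) = _
    dsimp +instances only [Edge.tail, Edge.head]
    by_cases hij : i = j
    · have hne : ¬ i = j + 1 := by
        rw [hij]; exact fun hh => fin_one_ne_zero hk (left_eq_add.mp hh)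
      have h2 : (if j + 1 = 0 then (0:ℝ) else if i = j + 1 then -c (.a j) else 0) = 0 := by
        by_cases h0 : j + 1 = 0
        · rw [if_pos h0]
        · rw [if_neg h0, if_neg hne]
      rw [if_pos (by rw [hij]), if_pos hij.symm, h2]; ring
    · rw [if_neg (by simp [hij])]
      rw [if_neg (show ¬ j = i from fun h => hij h.symm)]
      by_cases h0 : j + 1 = 0
      · simp only [if_pos h0]
        rw [if_neg (show ¬ ((Sum.inl (i, false) : Vertex k) = Sum.inr false) by simp)]; ring
      · simp only [if_neg h0]
        by_cases hij1 : i = j + 1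
        · rw [if_pos (show (Sum.inl (i, false) : Vertex k) = Sum.inl (j + 1, false) by
            rw [hij1]), if_pos hij1]; ring
        · rw [if_neg (show ¬ ((Sum.inl (i, false) : Vertex k) = Sum.inl (j + 1, false)) by
            simp [hij1]), if_neg hij1]; ring
  have hB : ∀ j : Fin k, c (.b j) * liftMatrix k (Sum.inl (Sum.inl (i, false))) (.b j)
      = (if j = i then c (.b j) else 0) := by
    intro j
    show c (.b j) * (if (Sum.inl (i, false) : Vertex k) = (Edge.b j).tail then 1
        else if (Sum.inl (i, false) : Vertex k) = (Edge.b j).head then -1 else 0) = _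
    dsimp +instances only [Edge.tail, Edge.head]
    have hhead : ¬ ((Sum.inl (i, false) : Vertex k)
        = (if j + 1 = 0 then (Sum.inr true : Vertex k) else Sum.inl (j + 1, true))) := by
      by_cases h0 : j + 1 = 0 <;> simp [h0]
    rw [if_neg hhead]
    by_cases hij : i = j
    · rw [if_pos (show (Sum.inl (i, false) : Vertex k) = Sum.inl (j, false) by rw [hij]),
        if_pos hij.symm]; ring
    · rw [if_neg (show ¬ ((Sum.inl (i, false) : Vertex k) = Sum.inl (j, false)) by simp [hij]),
        if_neg (show ¬ j = i from fun h => hij h.symm)]; ring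
  have hC : ∀ j : Fin k, c (.c j) * liftMatrix k (Sum.inl (Sum.inl (i, false))) (.c j)
      = (if j + 1 = 0 then 0 else if i = j + 1 then -c (.c j) else 0) := by
    intro j
    show c (.c j) * (if (Sum.inl (i, false) : Vertex k) = (Edge.c j).tail then 1
        else if (Sum.inl (i, false) : Vertex k) = (Edge.c j).head then -1 else 0) = _
    dsimp +instances only [Edge.tail, Edge.head]
    rw [if_neg (show ¬ ((Sum.inl (i, false) : Vertex k) = Sum.inl (j, true)) by simp)]
    by_cases h0 : j + 1 = 0
    · simp only [if_pos h0]
      rw [if_neg (show ¬ ((Sum.inl (i, false) : Vertex k) = Sum.inr false) by simp)]; ring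
    · simp only [if_neg h0]
      by_cases hij1 : i = j + 1
      · rw [if_pos (show (Sum.inl (i, false) : Vertex k) = Sum.inl (j + 1, false) by
          rw [hij1]), if_pos hij1]; ring
      · rw [if_neg (show ¬ ((Sum.inl (i, false) : Vertex k) = Sum.inl (j + 1, false)) by
          simp [hij1]), if_neg hij1]; ring
  have hD : ∀ j : Fin k, c (.d j) * liftMatrix k (Sum.inl (Sum.inl (i, false))) (.d j) = 0 := by
    intro j
    show c (.d j) * (if (Sum.inl (i, false) : Vertex k) = (Edge.d j).tail then 1
        else if (Sum.inl (i, false) : Vertex k) = (Edge.d j).head then -1 else 0) = _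
    dsimp +instances only [Edge.tail, Edge.head]
    have hhead : ¬ ((Sum.inl (i, false) : Vertex k)
        = (if j + 1 = 0 then (Sum.inr true : Vertex k) else Sum.inl (j + 1, true))) := by
      by_cases h0 : j + 1 = 0 <;> simp [h0]
    rw [if_neg (by simp), if_neg hhead]; ring
  have he1 : c .e1 * liftMatrix k (Sum.inl (Sum.inl (i, false))) .e1
      = (if i = 0 then c .e1 else 0) := by
    show c .e1 * (if (Sum.inl (i, false) : Vertex k) = (Edge.e1 : Edge k).tail then 1
        else if (Sum.inl (i, false) : Vertex k) = (Edge.e1 : Edge k).head then -1 else 0) = _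
    dsimp +instances only [Edge.tail, Edge.head]
    by_cases hi : i = 0
    · rw [if_pos (show (Sum.inl (i, false) : Vertex k) = Sum.inl (0, false) by rw [hi]),
        if_pos hi]; ring
    · rw [if_neg (show ¬ ((Sum.inl (i, false) : Vertex k) = Sum.inl (0, false)) by simp [hi]),
        if_neg (show ¬ ((Sum.inl (i, false) : Vertex k) = Sum.inr false) by simp), if_neg hi]
      ring
  have he2 : c .e2 * liftMatrix k (Sum.inl (Sum.inl (i, false))) .e2 = 0 := by
    show c .e2 * (if (Sum.inl (i, false) : Vertex k) = (Edge.e2 : Edge k).tail then 1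
        else if (Sum.inl (i, false) : Vertex k) = (Edge.e2 : Edge k).head then -1 else 0) = _
    dsimp +instances only [Edge.tail, Edge.head]
    rw [if_neg (by simp), if_neg (by simp)]; ring
  rw [Finset.sum_congr rfl (fun j _ => hA j), Finset.sum_congr rfl (fun j _ => hB j),
    Finset.sum_congr rfl (fun j _ => hC j), Finset.sum_congr rfl (fun j _ => hD j), he1, he2]
  rw [Finset.sum_add_distrib, Finset.sum_ite_eq' Finset.univ i (fun j => c (.a j)),
    Finset.sum_ite_eq' Finset.univ i (fun j => c (.b j)),
    sum_if_shift hk (fun j => -c (.a j)) i, sum_if_shift hk (fun j => -c (.c j)) i,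
    Finset.sum_const_zero, if_pos (Finset.mem_univ i), if_pos (Finset.mem_univ i)]
  by_cases hi : i = 0
  · simp only [if_pos hi]; ring
  · simp only [if_neg hi]; ring

end MyRows
section MyRows2

open Edge

variable {k : ℕ} [NeZero k]

lemma rowY (hk : 3 ≤ k) (c : Edge k → ℝ) (i : Fin k) :
    ∑ e : Edge k, c e * liftMatrix k (Sum.inl (Sum.inl (i, true))) e
    = c (.c i) + c (.d i) + (if i = 0 then c .e2 else 0)
      - (if i = 0 then 0 else c (.b (i - 1)) + c (.d (i - 1))) := by
  classical
  rw [sum_edge (fun e => c e * liftMatrix k (Sum.inl (Sum.inl (i, true))) e)]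
  have hA : ∀ j : Fin k, c (.a j) * liftMatrix k (Sum.inl (Sum.inl (i, true))) (.a j) = 0 := by
    intro j
    show c (.a j) * (if (Sum.inl (i, true) : Vertex k) = (Edge.a j).tail then 1
        else if (Sum.inl (i, true) : Vertex k) = (Edge.a j).head then -1 else 0) = _
    dsimp +instances only [Edge.tail, Edge.head]
    have hhead : ¬ ((Sum.inl (i, true) : Vertex k)
        = (if j + 1 = 0 then (Sum.inr false : Vertex k) else Sum.inl (j + 1, false))) := by
      by_cases h0 : j + 1 = 0 <;> simp [h0]
    rw [if_neg (show ¬ ((Sum.inl (i, true) : Vertex k) = Sum.inl (j, false)) by simp),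
      if_neg hhead]; ring
  have hB : ∀ j : Fin k, c (.b j) * liftMatrix k (Sum.inl (Sum.inl (i, true))) (.b j)
      = (if j + 1 = 0 then 0 else if i = j + 1 then -c (.b j) else 0) := by
    intro j
    show c (.b j) * (if (Sum.inl (i, true) : Vertex k) = (Edge.b j).tail then 1
        else if (Sum.inl (i, true) : Vertex k) = (Edge.b j).head then -1 else 0) = _
    dsimp +instances only [Edge.tail, Edge.head]
    rw [if_neg (show ¬ ((Sum.inl (i, true) : Vertex k) = Sum.inl (j, false)) by simp)]
    by_cases h0 : j + 1 = 0
    · simp only [if_pos h0]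
      rw [if_neg (show ¬ ((Sum.inl (i, true) : Vertex k) = Sum.inr true) by simp)]; ring
    · simp only [if_neg h0]
      by_cases hij1 : i = j + 1
      · rw [if_pos (show (Sum.inl (i, true) : Vertex k) = Sum.inl (j + 1, true) by
          rw [hij1]), if_pos hij1]; ring
      · rw [if_neg (show ¬ ((Sum.inl (i, true) : Vertex k) = Sum.inl (j + 1, true)) by
          simp [hij1]), if_neg hij1]; ring
  have hC : ∀ j : Fin k, c (.c j) * liftMatrix k (Sum.inl (Sum.inl (i, true))) (.c j)
      = (if j = i then c (.c j) else 0) := by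
    intro j
    show c (.c j) * (if (Sum.inl (i, true) : Vertex k) = (Edge.c j).tail then 1
        else if (Sum.inl (i, true) : Vertex k) = (Edge.c j).head then -1 else 0) = _
    dsimp +instances only [Edge.tail, Edge.head]
    have hhead : ¬ ((Sum.inl (i, true) : Vertex k)
        = (if j + 1 = 0 then (Sum.inr false : Vertex k) else Sum.inl (j + 1, false))) := by
      by_cases h0 : j + 1 = 0 <;> simp [h0]
    rw [if_neg hhead]
    by_cases hij : i = j
    · rw [if_pos (show (Sum.inl (i, true) : Vertex k) = Sum.inl (j, true) by rw [hij]),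
        if_pos hij.symm]; ring
    · rw [if_neg (show ¬ ((Sum.inl (i, true) : Vertex k) = Sum.inl (j, true)) by simp [hij]),
        if_neg (show ¬ j = i from fun h => hij h.symm)]; ring
  have hD : ∀ j : Fin k, c (.d j) * liftMatrix k (Sum.inl (Sum.inl (i, true))) (.d j)
      = (if j = i then c (.d j) else 0)
        + (if j + 1 = 0 then 0 else if i = j + 1 then -c (.d j) else 0) := by
    intro j
    show c (.d j) * (if (Sum.inl (i, true) : Vertex k) = (Edge.d j).tail then 1
        else if (Sum.inl (i, true) : Vertex k) = (Edge.d j).head then -1 else 0) = _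
    dsimp +instances only [Edge.tail, Edge.head]
    by_cases hij : i = j
    · have hne : ¬ i = j + 1 := by
        rw [hij]; exact fun hh => fin_one_ne_zero hk (left_eq_add.mp hh)
      have h2 : (if j + 1 = 0 then (0:ℝ) else if i = j + 1 then -c (.d j) else 0) = 0 := by
        by_cases h0 : j + 1 = 0
        · rw [if_pos h0]
        · rw [if_neg h0, if_neg hne]
      rw [if_pos (show (Sum.inl (i, true) : Vertex k) = Sum.inl (j, true) by rw [hij]),
        if_pos hij.symm, h2]; ring
    · rw [if_neg (show ¬ ((Sum.inl (i, true) : Vertex k) = Sum.inl (j, true)) by simp [hij])]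
      rw [if_neg (show ¬ j = i from fun h => hij h.symm)]
      by_cases h0 : j + 1 = 0
      · simp only [if_pos h0]
        rw [if_neg (show ¬ ((Sum.inl (i, true) : Vertex k) = Sum.inr true) by simp)]; ring
      · simp only [if_neg h0]
        by_cases hij1 : i = j + 1
        · rw [if_pos (show (Sum.inl (i, true) : Vertex k) = Sum.inl (j + 1, true) by
            rw [hij1]), if_pos hij1]; ring
        · rw [if_neg (show ¬ ((Sum.inl (i, true) : Vertex k) = Sum.inl (j + 1, true)) by
            simp [hij1]), if_neg hij1]; ring
  have he1 : c .e1 * liftMatrix k (Sum.inl (Sum.inl (i, true))) .e1 = 0 := by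
    show c .e1 * (if (Sum.inl (i, true) : Vertex k) = (Edge.e1 : Edge k).tail then 1
        else if (Sum.inl (i, true) : Vertex k) = (Edge.e1 : Edge k).head then -1 else 0) = _
    dsimp +instances only [Edge.tail, Edge.head]
    rw [if_neg (show ¬ ((Sum.inl (i, true) : Vertex k) = Sum.inl (0, false)) by simp),
      if_neg (show ¬ ((Sum.inl (i, true) : Vertex k) = Sum.inr false) by simp)]; ring
  have he2 : c .e2 * liftMatrix k (Sum.inl (Sum.inl (i, true))) .e2
      = (if i = 0 then c .e2 else 0) := by
    show c .e2 * (if (Sum.inl (i, true) : Vertex k) = (Edge.e2 : Edge k).tail then 1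
        else if (Sum.inl (i, true) : Vertex k) = (Edge.e2 : Edge k).head then -1 else 0) = _
    dsimp +instances only [Edge.tail, Edge.head]
    by_cases hi : i = 0
    · rw [if_pos (show (Sum.inl (i, true) : Vertex k) = Sum.inl (0, true) by rw [hi]),
        if_pos hi]; ring
    · rw [if_neg (show ¬ ((Sum.inl (i, true) : Vertex k) = Sum.inl (0, true)) by simp [hi]),
        if_neg (show ¬ ((Sum.inl (i, true) : Vertex k) = Sum.inr true) by simp), if_neg hi]
      ring
  rw [Finset.sum_congr rfl (fun j _ => hA j), Finset.sum_congr rfl (fun j _ => hB j),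
    Finset.sum_congr rfl (fun j _ => hC j), Finset.sum_congr rfl (fun j _ => hD j), he1, he2]
  rw [Finset.sum_add_distrib, Finset.sum_ite_eq' Finset.univ i (fun j => c (.c j)),
    Finset.sum_ite_eq' Finset.univ i (fun j => c (.d j)),
    sum_if_shift hk (fun j => -c (.b j)) i, sum_if_shift hk (fun j => -c (.d j)) i,
    Finset.sum_const_zero, if_pos (Finset.mem_univ i), if_pos (Finset.mem_univ i)]
  by_cases hi : i = 0
  · simp only [if_pos hi]; ring
  · simp only [if_neg hi]; ring

lemma rowT1 (hk : 3 ≤ k) (c : Edge k → ℝ) :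
    ∑ e : Edge k, c e * liftMatrix k (Sum.inl (Sum.inr false)) e
    = -c (.a (lastIdx k)) - c (.c (lastIdx k)) - c .e1 := by
  classical
  rw [sum_edge (fun e => c e * liftMatrix k (Sum.inl (Sum.inr false)) e)]
  have hA : ∀ j : Fin k, c (.a j) * liftMatrix k (Sum.inl (Sum.inr false)) (.a j)
      = (if j + 1 = 0 then -c (.a j) else 0) := by
    intro j
    show c (.a j) * (if (Sum.inr false : Vertex k) = (Edge.a j).tail then 1
        else if (Sum.inr false : Vertex k) = (Edge.a j).head then -1 else 0) = _
    dsimp +instances only [Edge.tail, Edge.head]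
    rw [if_neg (show ¬ ((Sum.inr false : Vertex k) = Sum.inl (j, false)) by simp)]
    by_cases h0 : j + 1 = 0
    · simp only [if_pos h0]
      simp
    · simp only [if_neg h0]
      rw [if_neg (show ¬ ((Sum.inr false : Vertex k) = Sum.inl (j + 1, false)) by simp)]; ring
  have hB : ∀ j : Fin k, c (.b j) * liftMatrix k (Sum.inl (Sum.inr false)) (.b j) = 0 := by
    intro j
    show c (.b j) * (if (Sum.inr false : Vertex k) = (Edge.b j).tail then 1
        else if (Sum.inr false : Vertex k) = (Edge.b j).head then -1 else 0) = _
    dsimp +instances only [Edge.tail, Edge.head]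
    have hhead : ¬ ((Sum.inr false : Vertex k)
        = (if j + 1 = 0 then (Sum.inr true : Vertex k) else Sum.inl (j + 1, true))) := by
      by_cases h0 : j + 1 = 0 <;> simp [h0]
    rw [if_neg (show ¬ ((Sum.inr false : Vertex k) = Sum.inl (j, false)) by simp),
      if_neg hhead]; ring
  have hC : ∀ j : Fin k, c (.c j) * liftMatrix k (Sum.inl (Sum.inr false)) (.c j)
      = (if j + 1 = 0 then -c (.c j) else 0) := by
    intro j
    show c (.c j) * (if (Sum.inr false : Vertex k) = (Edge.c j).tail then 1
        else if (Sum.inr false : Vertex k) = (Edge.c j).head then -1 else 0) = _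
    dsimp +instances only [Edge.tail, Edge.head]
    rw [if_neg (show ¬ ((Sum.inr false : Vertex k) = Sum.inl (j, true)) by simp)]
    by_cases h0 : j + 1 = 0
    · simp only [if_pos h0]
      simp
    · simp only [if_neg h0]
      rw [if_neg (show ¬ ((Sum.inr false : Vertex k) = Sum.inl (j + 1, false)) by simp)]; ring
  have hD : ∀ j : Fin k, c (.d j) * liftMatrix k (Sum.inl (Sum.inr false)) (.d j) = 0 := by
    intro j
    show c (.d j) * (if (Sum.inr false : Vertex k) = (Edge.d j).tail then 1
        else if (Sum.inr false : Vertex k) = (Edge.d j).head then -1 else 0) = _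
    dsimp +instances only [Edge.tail, Edge.head]
    have hhead : ¬ ((Sum.inr false : Vertex k)
        = (if j + 1 = 0 then (Sum.inr true : Vertex k) else Sum.inl (j + 1, true))) := by
      by_cases h0 : j + 1 = 0 <;> simp [h0]
    rw [if_neg (show ¬ ((Sum.inr false : Vertex k) = Sum.inl (j, true)) by simp),
      if_neg hhead]; ring
  have he1 : c .e1 * liftMatrix k (Sum.inl (Sum.inr false)) .e1 = -c .e1 := by
    show c .e1 * (if (Sum.inr false : Vertex k) = (Edge.e1 : Edge k).tail then 1
        else if (Sum.inr false : Vertex k) = (Edge.e1 : Edge k).head then -1 else 0) = _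
    dsimp +instances only [Edge.tail, Edge.head]
    simp
  have he2 : c .e2 * liftMatrix k (Sum.inl (Sum.inr false)) .e2 = 0 := by
    show c .e2 * (if (Sum.inr false : Vertex k) = (Edge.e2 : Edge k).tail then 1
        else if (Sum.inr false : Vertex k) = (Edge.e2 : Edge k).head then -1 else 0) = _
    dsimp +instances only [Edge.tail, Edge.head]
    rw [if_neg (show ¬ ((Sum.inr false : Vertex k) = Sum.inl (0, true)) by simp),
      if_neg (show ¬ ((Sum.inr false : Vertex k) = Sum.inr true) by simp)]; ring
  rw [Finset.sum_congr rfl (fun j _ => hA j), Finset.sum_congr rfl (fun j _ => hB j),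
    Finset.sum_congr rfl (fun j _ => hC j), Finset.sum_congr rfl (fun j _ => hD j), he1, he2]
  rw [sum_if_last hk (fun j => -c (.a j)), sum_if_last hk (fun j => -c (.c j)),
    Finset.sum_const_zero]
  ring

lemma rowT2 (hk : 3 ≤ k) (c : Edge k → ℝ) :
    ∑ e : Edge k, c e * liftMatrix k (Sum.inl (Sum.inr true)) e
    = -c (.b (lastIdx k)) - c (.d (lastIdx k)) - c .e2 := by
  classical
  rw [sum_edge (fun e => c e * liftMatrix k (Sum.inl (Sum.inr true)) e)]
  have hA : ∀ j : Fin k, c (.a j) * liftMatrix k (Sum.inl (Sum.inr true)) (.a j) = 0 := by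
    intro j
    show c (.a j) * (if (Sum.inr true : Vertex k) = (Edge.a j).tail then 1
        else if (Sum.inr true : Vertex k) = (Edge.a j).head then -1 else 0) = _
    dsimp +instances only [Edge.tail, Edge.head]
    have hhead : ¬ ((Sum.inr true : Vertex k)
        = (if j + 1 = 0 then (Sum.inr false : Vertex k) else Sum.inl (j + 1, false))) := by
      by_cases h0 : j + 1 = 0 <;> simp [h0]
    rw [if_neg (show ¬ ((Sum.inr true : Vertex k) = Sum.inl (j, false)) by simp),
      if_neg hhead]; ring
  have hB : ∀ j : Fin k, c (.b j) * liftMatrix k (Sum.inl (Sum.inr true)) (.b j)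
      = (if j + 1 = 0 then -c (.b j) else 0) := by
    intro j
    show c (.b j) * (if (Sum.inr true : Vertex k) = (Edge.b j).tail then 1
        else if (Sum.inr true : Vertex k) = (Edge.b j).head then -1 else 0) = _
    dsimp +instances only [Edge.tail, Edge.head]
    rw [if_neg (show ¬ ((Sum.inr true : Vertex k) = Sum.inl (j, false)) by simp)]
    by_cases h0 : j + 1 = 0
    · simp only [if_pos h0]
      simp
    · simp only [if_neg h0]
      rw [if_neg (show ¬ ((Sum.inr true : Vertex k) = Sum.inl (j + 1, true)) by simp)]; ring
  have hC : ∀ j : Fin k, c (.c j) * liftMatrix k (Sum.inl (Sum.inr true)) (.c j) = 0 := by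
    intro j
    show c (.c j) * (if (Sum.inr true : Vertex k) = (Edge.c j).tail then 1
        else if (Sum.inr true : Vertex k) = (Edge.c j).head then -1 else 0) = _
    dsimp +instances only [Edge.tail, Edge.head]
    have hhead : ¬ ((Sum.inr true : Vertex k)
        = (if j + 1 = 0 then (Sum.inr false : Vertex k) else Sum.inl (j + 1, false))) := by
      by_cases h0 : j + 1 = 0 <;> simp [h0]
    rw [if_neg (show ¬ ((Sum.inr true : Vertex k) = Sum.inl (j, true)) by simp),
      if_neg hhead]; ring
  have hD : ∀ j : Fin k, c (.d j) * liftMatrix k (Sum.inl (Sum.inr true)) (.d j)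
      = (if j + 1 = 0 then -c (.d j) else 0) := by
    intro j
    show c (.d j) * (if (Sum.inr true : Vertex k) = (Edge.d j).tail then 1
        else if (Sum.inr true : Vertex k) = (Edge.d j).head then -1 else 0) = _
    dsimp +instances only [Edge.tail, Edge.head]
    rw [if_neg (show ¬ ((Sum.inr true : Vertex k) = Sum.inl (j, true)) by simp)]
    by_cases h0 : j + 1 = 0
    · simp only [if_pos h0]
      simp
    · simp only [if_neg h0]
      rw [if_neg (show ¬ ((Sum.inr true : Vertex k) = Sum.inl (j + 1, true)) by simp)]; ring
  have he1 : c .e1 * liftMatrix k (Sum.inl (Sum.inr true)) .e1 = 0 := by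
    show c .e1 * (if (Sum.inr true : Vertex k) = (Edge.e1 : Edge k).tail then 1
        else if (Sum.inr true : Vertex k) = (Edge.e1 : Edge k).head then -1 else 0) = _
    dsimp +instances only [Edge.tail, Edge.head]
    rw [if_neg (show ¬ ((Sum.inr true : Vertex k) = Sum.inl (0, false)) by simp),
      if_neg (show ¬ ((Sum.inr true : Vertex k) = Sum.inr false) by simp)]; ring
  have he2 : c .e2 * liftMatrix k (Sum.inl (Sum.inr true)) .e2 = -c .e2 := by
    show c .e2 * (if (Sum.inr true : Vertex k) = (Edge.e2 : Edge k).tail then 1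
        else if (Sum.inr true : Vertex k) = (Edge.e2 : Edge k).head then -1 else 0) = _
    dsimp +instances only [Edge.tail, Edge.head]
    simp
  rw [Finset.sum_congr rfl (fun j _ => hA j), Finset.sum_congr rfl (fun j _ => hB j),
    Finset.sum_congr rfl (fun j _ => hC j), Finset.sum_congr rfl (fun j _ => hD j), he1, he2]
  rw [sum_if_last hk (fun j => -c (.b j)), sum_if_last hk (fun j => -c (.d j)),
    Finset.sum_const_zero]
  ring

lemma rowGamma (c : Edge k → ℝ) :
    ∑ e : Edge k, c e * liftMatrix k (Sum.inr ()) e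
    = (∑ j, c (.a j)) + (∑ j, c (.d j)) := by
  rw [sum_edge (fun e => c e * liftMatrix k (Sum.inr ()) e)]
  have h : ∀ e : Edge k, c e * liftMatrix k (Sum.inr ()) e = c e * gammaL e := fun e => rfl
  simp only [h, gammaL, mul_one, mul_zero, Finset.sum_const_zero]
  ring

end MyRows2
section MyAlg

open Edge

variable {k : ℕ} [NeZero k]

/-- extraction of all row equations from a vanishing linear combination -/
lemma myRowEqs (hk : 3 ≤ k) (c : Edge k → ℝ)
    (hsum : ∑ e : Edge k, c e • (fun v => liftMatrix k v e) = (0 : (Vertex k ⊕ Unit) → ℝ)) :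
    (∀ i : Fin k, c (.a i) + c (.b i) + (if i = 0 then c .e1 else 0)
        - (if i = 0 then 0 else c (.a (i - 1)) + c (.c (i - 1))) = 0)
    ∧ (∀ i : Fin k, c (.c i) + c (.d i) + (if i = 0 then c .e2 else 0)
        - (if i = 0 then 0 else c (.b (i - 1)) + c (.d (i - 1))) = 0)
    ∧ (-c (.a (lastIdx k)) - c (.c (lastIdx k)) - c .e1 = 0)
    ∧ (-c (.b (lastIdx k)) - c (.d (lastIdx k)) - c .e2 = 0)
    ∧ ((∑ j, c (.a j)) + (∑ j, c (.d j)) = 0) := by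
  have hrow : ∀ r, ∑ e : Edge k, c e * liftMatrix k r e = 0 := by
    intro r
    have h := congrFun hsum r
    simpa [Finset.sum_apply] using h
  exact ⟨fun i => by rw [← rowX hk c i]; exact hrow _,
    fun i => by rw [← rowY hk c i]; exact hrow _,
    by rw [← rowT1 hk c]; exact hrow _,
    by rw [← rowT2 hk c]; exact hrow _,
    by rw [← rowGamma c]; exact hrow _⟩

lemma myLinIndepIff {ι : Type} [Fintype ι] {V : Type} [AddCommGroup V] [Module ℝ V]
    (v : ι → V) (S : Set ι) :
    LinearIndependent ℝ (fun e : S => v e) ↔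
      ∀ c : ι → ℝ, (∀ e ∉ S, c e = 0) → ∑ e, c e • v e = 0 → ∀ e, c e = 0 := by
  classical
  haveI : Fintype S := S.toFinite.fintype
  rw [Fintype.linearIndependent_iff]
  have hconv : ∀ c : ι → ℝ, (∀ e ∉ S, c e = 0) →
      ∑ x : S, c x • v x = ∑ e, c e • v e := by
    intro c hc
    rw [← Finset.sum_subtype S.toFinset (fun x => Set.mem_toFinset) (fun e => c e • v e)]
    exact Finset.sum_subset (Finset.subset_univ _)
      (fun x _ hx => by rw [hc x (by simpa using hx), zero_smul])
  constructor
  · intro h c hc hsum e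
    by_cases he : e ∈ S
    · exact h (fun x => c x) (by rw [hconv c hc]; exact hsum) ⟨e, he⟩
    · exact hc e he
  · intro h g hg i
    set c : ι → ℝ := fun e => if he : e ∈ S then g ⟨e, he⟩ else 0 with hcdef
    have hc : ∀ e ∉ S, c e = 0 := fun e he => dif_neg he
    have hcg : ∀ x : S, c x = g x := fun x => dif_pos x.2
    have hsum : ∑ e, c e • v e = 0 := by
      rw [← hconv c hc]
      rw [Finset.sum_congr rfl (fun x _ => by rw [hcg x])]
      exact hg
    have := h c hc hsum i
    rwa [hcg i] at this

/-- all-zero conclusion for the P side -/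
lemma pAllZero (hk : 3 ≤ k) (c : Edge k → ℝ)
    (hsum : ∑ e : Edge k, c e • (fun v => liftMatrix k v e) = (0 : (Vertex k ⊕ Unit) → ℝ))
    (hb : ∀ j, c (.b j) = 0) (hc : ∀ j, c (.c j) = 0)
    (hf : c .e1 = 0 ∨ c .e2 = 0 ∨ (∃ j, c (.a j) = 0) ∨ (∃ j, c (.d j) = 0)) :
    ∀ e, c e = 0 := by
  obtain ⟨hx, hy, ht1, ht2, hg⟩ := myRowEqs hk c hsum
  have ha : ∀ i : Fin k, c (.a i) = -c .e1 := by
    have key : ∀ n (h : n < k), c (.a ⟨n, h⟩) = -c .e1 := by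
      intro n
      induction n with
      | zero =>
        intro h
        have h0 := hx 0
        rw [if_pos rfl, if_pos rfl] at h0
        rw [fin_mk_zero' h]
        have := hb 0
        linarith
      | succ n ih =>
        intro h
        have hn : n < k := by omega
        have step := hx (⟨n, hn⟩ + 1)
        rw [fin_mk_add_one hk hn h] at step
        rw [if_neg (fin_mk_succ_ne_zero hk h), if_neg (fin_mk_succ_ne_zero hk h),
          fin_sub_one_mk hk hn h] at step
        have h1 := ih hn
        have h2 := hb ⟨n + 1, h⟩
        have h3 := hc ⟨n, hn⟩
        linarith
    intro i
    exact key i.1 i.2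
  have hd : ∀ i : Fin k, c (.d i) = -c .e2 := by
    have key : ∀ n (h : n < k), c (.d ⟨n, h⟩) = -c .e2 := by
      intro n
      induction n with
      | zero =>
        intro h
        have h0 := hy 0
        rw [if_pos rfl, if_pos rfl] at h0
        rw [fin_mk_zero' h]
        have := hc 0
        linarith
      | succ n ih =>
        intro h
        have hn : n < k := by omega
        have step := hy (⟨n, hn⟩ + 1)
        rw [fin_mk_add_one hk hn h] at step
        rw [if_neg (fin_mk_succ_ne_zero hk h), if_neg (fin_mk_succ_ne_zero hk h),
          fin_sub_one_mk hk hn h] at step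
        have h1 := ih hn
        have h2 := hc ⟨n + 1, h⟩
        have h3 := hb ⟨n, hn⟩
        linarith
    intro i
    exact key i.1 i.2
  have hsum_a : (∑ j, c (.a j)) = (k : ℝ) * (-c .e1) := by
    rw [Finset.sum_congr rfl (fun j _ => ha j), Finset.sum_const, Finset.card_univ,
      Fintype.card_fin, nsmul_eq_mul]
  have hsum_d : (∑ j, c (.d j)) = (k : ℝ) * (-c .e2) := by
    rw [Finset.sum_congr rfl (fun j _ => hd j), Finset.sum_const, Finset.card_univ,
      Fintype.card_fin, nsmul_eq_mul]
  have hkne : (k : ℝ) ≠ 0 := by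
    simp only [ne_eq, Nat.cast_eq_zero]
    omega
  have he12 : c .e1 + c .e2 = 0 := by
    rw [hsum_a, hsum_d] at hg
    have : (k : ℝ) * (c .e1 + c .e2) = 0 := by ring_nf; ring_nf at hg; linarith
    exact (mul_eq_zero.mp this).resolve_left hkne
  have he1 : c .e1 = 0 := by
    rcases hf with h | h | ⟨j, h⟩ | ⟨j, h⟩
    · exact h
    · linarith
    · have := ha j; linarith
    · have := hd j; linarith
  have he2 : c .e2 = 0 := by linarith
  intro e
  cases e with
  | a j => rw [ha j, he1]; ring
  | b j => exact hb j
  | c j => exact hc j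
  | d j => rw [hd j, he2]; ring
  | e1 => exact he1
  | e2 => exact he2

/-- all-zero conclusion for the Q side -/
lemma qAllZero (hk : 3 ≤ k) (hodd : Odd k) (c : Edge k → ℝ)
    (hsum : ∑ e : Edge k, c e • (fun v => liftMatrix k v e) = (0 : (Vertex k ⊕ Unit) → ℝ))
    (ha : ∀ j, c (.a j) = 0) (hd : ∀ j, c (.d j) = 0)
    (hf : c .e1 = 0 ∨ c .e2 = 0 ∨ (∃ j, c (.b j) = 0) ∨ (∃ j, c (.c j) = 0)) :
    ∀ e, c e = 0 := by
  obtain ⟨hx, hy, ht1, ht2, hg⟩ := myRowEqs hk c hsum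
  have key : ∀ n (h : n < k),
      c (.b ⟨n, h⟩) = -(if n % 2 = 0 then c .e1 else c .e2)
      ∧ c (.c ⟨n, h⟩) = -(if n % 2 = 0 then c .e2 else c .e1) := by
    intro n
    induction n with
    | zero =>
      intro h
      have h0 := hx 0
      have h0' := hy 0
      rw [if_pos rfl, if_pos rfl] at h0
      rw [if_pos rfl, if_pos rfl] at h0'
      have h1 := ha 0
      have h2 := hd 0
      rw [fin_mk_zero' h]
      constructor
      · rw [if_pos rfl]; linarith
      · rw [if_pos rfl]; linarith
    | succ n ih =>
      intro h
      have hn : n < k := by omega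
      obtain ⟨ihb, ihc⟩ := ih hn
      have stepx := hx (⟨n, hn⟩ + 1)
      have stepy := hy (⟨n, hn⟩ + 1)
      rw [fin_mk_add_one hk hn h] at stepx stepy
      rw [if_neg (fin_mk_succ_ne_zero hk h), if_neg (fin_mk_succ_ne_zero hk h),
        fin_sub_one_mk hk hn h] at stepx
      rw [if_neg (fin_mk_succ_ne_zero hk h), if_neg (fin_mk_succ_ne_zero hk h),
        fin_sub_one_mk hk hn h] at stepy
      have h1 := ha ⟨n + 1, h⟩
      have h2 := hd ⟨n + 1, h⟩
      have h3 := ha ⟨n, hn⟩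
      have h4 := hd ⟨n, hn⟩
      by_cases hpar : n % 2 = 0
      · have hpar' : ¬ (n + 1) % 2 = 0 := by omega
        rw [if_pos hpar] at ihb ihc
        rw [if_neg hpar', if_neg hpar']
        constructor <;> linarith
      · have hpar' : (n + 1) % 2 = 0 := by omega
        rw [if_neg hpar] at ihb ihc
        rw [if_pos hpar', if_pos hpar']
        constructor <;> linarith
  have hlast : (k - 1) % 2 = 0 := by
    obtain ⟨m, hm⟩ := hodd
    omega
  have hkl : k - 1 < k := by omega
  have hclast := (key (k - 1) hkl).2
  have hblast := (key (k - 1) hkl).1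
  rw [if_pos hlast] at hclast hblast
  have hlastIdx : lastIdx k = ⟨k - 1, hkl⟩ := rfl
  rw [hlastIdx] at ht1 ht2
  have h3 := ha (lastIdx k)
  have he12 : c .e1 = c .e2 := by
    have := ha ⟨k - 1, hkl⟩
    linarith
  have he1 : c .e1 = 0 := by
    rcases hf with h | h | ⟨j, h⟩ | ⟨j, h⟩
    · exact h
    · linarith
    · have := (key j.1 j.2).1
      by_cases hp : (j : Fin k).1 % 2 = 0
      · rw [if_pos hp] at this
        rw [show (⟨j.1, j.2⟩ : Fin k) = j from rfl] at this
        linarith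
      · rw [if_neg hp] at this
        rw [show (⟨j.1, j.2⟩ : Fin k) = j from rfl] at this
        linarith
    · have := (key j.1 j.2).2
      by_cases hp : (j : Fin k).1 % 2 = 0
      · rw [if_pos hp] at this
        rw [show (⟨j.1, j.2⟩ : Fin k) = j from rfl] at this
        linarith
      · rw [if_neg hp] at this
        rw [show (⟨j.1, j.2⟩ : Fin k) = j from rfl] at this
        linarith
  have he2 : c .e2 = 0 := by linarith
  intro e
  cases e with
  | a j => exact ha j
  | b j =>
    have := (key j.1 j.2).1
    rw [show (⟨j.1, j.2⟩ : Fin k) = j from rfl] at this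
    by_cases hp : (j : Fin k).1 % 2 = 0
    · rw [if_pos hp] at this; linarith
    · rw [if_neg hp] at this; linarith
  | c j =>
    have := (key j.1 j.2).2
    rw [show (⟨j.1, j.2⟩ : Fin k) = j from rfl] at this
    by_cases hp : (j : Fin k).1 % 2 = 0
    · rw [if_pos hp] at this; linarith
    · rw [if_neg hp] at this; linarith
  | d j => exact hd j
  | e1 => exact he1
  | e2 => exact he2

/-- the functional summing all the `false` rows: Σ c(b) = Σ c(c) -/
lemma phiBC (hk : 3 ≤ k) (c : Edge k → ℝ)
    (hsum : ∑ e : Edge k, c e • (fun v => liftMatrix k v e) = (0 : (Vertex k ⊕ Unit) → ℝ)) :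
    (∑ j, c (.b j)) = (∑ j, c (.c j)) := by
  obtain ⟨hx, _, ht1, _, _⟩ := myRowEqs hk c hsum
  have hsx : ∑ i : Fin k, (c (.a i) + c (.b i) + (if i = 0 then c .e1 else 0)
      - (if i = 0 then 0 else c (.a (i - 1)) + c (.c (i - 1)))) = 0 :=
    Finset.sum_eq_zero (fun i _ => hx i)
  rw [Finset.sum_sub_distrib, Finset.sum_add_distrib, Finset.sum_add_distrib] at hsx
  rw [Finset.sum_ite_eq' Finset.univ (0 : Fin k) (fun _ => c .e1),
    if_pos (Finset.mem_univ _),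
    sum_pred hk (fun j => c (.a j) + c (.c j))] at hsx
  rw [Finset.sum_add_distrib] at hsx
  have hlastIdx : lastIdx k = ⟨k - 1, by omega⟩ := rfl
  linarith
end MyAlg
section MyCerts

open Edge

variable {k : ℕ} [NeZero k]

def Hp (k : ℕ) : Set (Edge k) := Pset k ∪ {Edge.e1, Edge.e2}

def Hq (k : ℕ) : Set (Edge k) := Qset k ∪ {Edge.e1, Edge.e2}

lemma mem_Hp {e : Edge k} :
    e ∈ Hp k ↔ (∃ j, e = .a j) ∨ (∃ j, e = .d j) ∨ e = .e1 ∨ e = .e2 := by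
  simp only [Hp, Pset, Set.mem_union, Set.mem_setOf_eq, Set.mem_insert_iff,
    Set.mem_singleton_iff, exists_or]
  tauto

lemma mem_Hq {e : Edge k} :
    e ∈ Hq k ↔ (∃ j, e = .b j) ∨ (∃ j, e = .c j) ∨ e = .e1 ∨ e = .e2 := by
  simp only [Hq, Qset, Set.mem_union, Set.mem_setOf_eq, Set.mem_insert_iff,
    Set.mem_singleton_iff, exists_or]
  tauto

lemma b_not_mem_Hp (j : Fin k) : (Edge.b j) ∉ Hp k := by
  rw [mem_Hp]
  rintro (⟨i, h⟩ | ⟨i, h⟩ | h | h) <;> simp at h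

lemma c_not_mem_Hp (j : Fin k) : (Edge.c j) ∉ Hp k := by
  rw [mem_Hp]
  rintro (⟨i, h⟩ | ⟨i, h⟩ | h | h) <;> simp at h

lemma a_not_mem_Hq (j : Fin k) : (Edge.a j) ∉ Hq k := by
  rw [mem_Hq]
  rintro (⟨i, h⟩ | ⟨i, h⟩ | h | h) <;> simp at h

lemma d_not_mem_Hq (j : Fin k) : (Edge.d j) ∉ Hq k := by
  rw [mem_Hq]
  rintro (⟨i, h⟩ | ⟨i, h⟩ | h | h) <;> simp at h

def cP (k : ℕ) : Edge k → ℝ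
  | .a _ => 1
  | .b _ => 0
  | .c _ => 0
  | .d _ => -1
  | .e1 => -1
  | .e2 => 1

def cQ (k : ℕ) : Edge k → ℝ
  | .a _ => 0
  | .b _ => 1
  | .c _ => 1
  | .d _ => 0
  | .e1 => -1
  | .e2 => -1

lemma hsumP (hk : 3 ≤ k) :
    ∑ e : Edge k, cP k e • (fun v => liftMatrix k v e) = (0 : (Vertex k ⊕ Unit) → ℝ) := by
  funext r
  rw [Finset.sum_apply]
  simp only [Pi.smul_apply, smul_eq_mul, Pi.zero_apply]
  rcases r with (⟨i, b⟩ | b) | u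
  · cases b
    · rw [rowX hk (cP k) i]
      simp only [cP]
      by_cases hi : i = 0
      · simp only [if_pos hi]; ring
      · simp only [if_neg hi]; ring
    · rw [rowY hk (cP k) i]
      simp only [cP]
      by_cases hi : i = 0
      · simp only [if_pos hi]; ring
      · simp only [if_neg hi]; ring
  · cases b
    · rw [rowT1 hk (cP k)]
      simp only [cP]; ring
    · rw [rowT2 hk (cP k)]
      simp only [cP]; ring
  · rw [rowGamma (cP k)]
    simp only [cP, Finset.sum_const, Finset.card_univ, Fintype.card_fin, nsmul_eq_mul]
    ring

lemma hsumQ (hk : 3 ≤ k) :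
    ∑ e : Edge k, cQ k e • (fun v => liftMatrix k v e) = (0 : (Vertex k ⊕ Unit) → ℝ) := by
  funext r
  rw [Finset.sum_apply]
  simp only [Pi.smul_apply, smul_eq_mul, Pi.zero_apply]
  rcases r with (⟨i, b⟩ | b) | u
  · cases b
    · rw [rowX hk (cQ k) i]
      simp only [cQ]
      by_cases hi : i = 0
      · simp only [if_pos hi]; ring
      · simp only [if_neg hi]; ring
    · rw [rowY hk (cQ k) i]
      simp only [cQ]
      by_cases hi : i = 0
      · simp only [if_pos hi]; ring
      · simp only [if_neg hi]; ring
  · cases b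
    · rw [rowT1 hk (cQ k)]
      simp only [cQ]; ring
    · rw [rowT2 hk (cQ k)]
      simp only [cQ]; ring
  · rw [rowGamma (cQ k)]
    simp only [cQ, Finset.sum_const, Finset.card_univ, Fintype.card_fin, nsmul_eq_mul]
    ring

end MyCerts
section MyMatroid

open Edge

variable {k : ℕ} [NeZero k] {N : Matroid (Edge k)}

lemma myIndepIff (hN : IsColMatroid (liftMatrix k) N) (S : Set (Edge k)) :
    N.Indep S ↔ ∀ c : Edge k → ℝ, (∀ e ∉ S, c e = 0) →
      ∑ e : Edge k, c e • (fun v => liftMatrix k v e) = (0 : (Vertex k ⊕ Unit) → ℝ) →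
      ∀ e, c e = 0 := by
  rw [hN.2 S]
  exact myLinIndepIff (fun e => fun v => liftMatrix k v e) S

lemma depHp (hk : 3 ≤ k) (hN : IsColMatroid (liftMatrix k) N) : N.Dep (Hp k) := by
  rw [Matroid.dep_iff]
  constructor
  · intro hind
    have hsupp : ∀ e ∉ Hp k, cP k e = 0 := by
      intro e he
      cases e with
      | a j => exact absurd (mem_Hp.mpr (Or.inl ⟨j, rfl⟩)) he
      | b j => rfl
      | c j => rfl
      | d j => exact absurd (mem_Hp.mpr (Or.inr (Or.inl ⟨j, rfl⟩))) he
      | e1 => exact absurd (mem_Hp.mpr (Or.inr (Or.inr (Or.inl rfl)))) he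
      | e2 => exact absurd (mem_Hp.mpr (Or.inr (Or.inr (Or.inr rfl)))) he
    have h := (myIndepIff hN _).mp hind (cP k) hsupp (hsumP hk) Edge.e1
    simp only [cP] at h
    norm_num at h
  · rw [hN.1]; exact Set.subset_univ _

lemma depHq (hk : 3 ≤ k) (hN : IsColMatroid (liftMatrix k) N) : N.Dep (Hq k) := by
  rw [Matroid.dep_iff]
  constructor
  · intro hind
    have hsupp : ∀ e ∉ Hq k, cQ k e = 0 := by
      intro e he
      cases e with
      | a j => rfl
      | b j => exact absurd (mem_Hq.mpr (Or.inl ⟨j, rfl⟩)) he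
      | c j => exact absurd (mem_Hq.mpr (Or.inr (Or.inl ⟨j, rfl⟩))) he
      | d j => rfl
      | e1 => exact absurd (mem_Hq.mpr (Or.inr (Or.inr (Or.inl rfl)))) he
      | e2 => exact absurd (mem_Hq.mpr (Or.inr (Or.inr (Or.inr rfl)))) he
    have h := (myIndepIff hN _).mp hind (cQ k) hsupp (hsumQ hk) Edge.e1
    simp only [cQ] at h
    norm_num at h
  · rw [hN.1]; exact Set.subset_univ _

lemma indepHpDiff (hk : 3 ≤ k) (hN : IsColMatroid (liftMatrix k) N) {f : Edge k}
    (hf : f ∈ Hp k) : N.Indep (Hp k \ {f}) := by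
  rw [myIndepIff hN]
  intro c hc hsum
  apply pAllZero hk c hsum
  · exact fun j => hc _ (fun h => b_not_mem_Hp j h.1)
  · exact fun j => hc _ (fun h => c_not_mem_Hp j h.1)
  · rcases mem_Hp.mp hf with ⟨j, rfl⟩ | ⟨j, rfl⟩ | rfl | rfl
    · exact Or.inr (Or.inr (Or.inl ⟨j, hc _ (by simp)⟩))
    · exact Or.inr (Or.inr (Or.inr ⟨j, hc _ (by simp)⟩))
    · exact Or.inl (hc _ (by simp))
    · exact Or.inr (Or.inl (hc _ (by simp)))

lemma indepHqDiff (hk : 3 ≤ k) (hodd : Odd k) (hN : IsColMatroid (liftMatrix k) N) {f : Edge k}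
    (hf : f ∈ Hq k) : N.Indep (Hq k \ {f}) := by
  rw [myIndepIff hN]
  intro c hc hsum
  apply qAllZero hk hodd c hsum
  · exact fun j => hc _ (fun h => a_not_mem_Hq j h.1)
  · exact fun j => hc _ (fun h => d_not_mem_Hq j h.1)
  · rcases mem_Hq.mp hf with ⟨j, rfl⟩ | ⟨j, rfl⟩ | rfl | rfl
    · exact Or.inr (Or.inr (Or.inl ⟨j, hc _ (by simp)⟩))
    · exact Or.inr (Or.inr (Or.inr ⟨j, hc _ (by simp)⟩))
    · exact Or.inl (hc _ (by simp))
    · exact Or.inr (Or.inl (hc _ (by simp)))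

lemma indepHpInsert (hk : 3 ≤ k) (hN : IsColMatroid (liftMatrix k) N) {f x : Edge k}
    (hf : f ∈ Hp k) (hx : x ∉ Hp k) : N.Indep (insert x (Hp k \ {f})) := by
  classical
  rw [myIndepIff hN]
  intro c hc hsum
  have hxbc : (∃ j, x = Edge.b j) ∨ (∃ j, x = Edge.c j) := by
    cases x with
    | a j => exact absurd (mem_Hp.mpr (Or.inl ⟨j, rfl⟩)) hx
    | b j => exact Or.inl ⟨j, rfl⟩
    | c j => exact Or.inr ⟨j, rfl⟩
    | d j => exact absurd (mem_Hp.mpr (Or.inr (Or.inl ⟨j, rfl⟩))) hx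
    | e1 => exact absurd (mem_Hp.mpr (Or.inr (Or.inr (Or.inl rfl)))) hx
    | e2 => exact absurd (mem_Hp.mpr (Or.inr (Or.inr (Or.inr rfl)))) hx
  have hb' : ∀ j, (Edge.b j : Edge k) ≠ x → c (.b j) = 0 := by
    intro j hj
    apply hc
    intro hmem
    rcases Set.mem_insert_iff.mp hmem with h | h
    · exact hj h
    · exact b_not_mem_Hp j h.1
  have hc' : ∀ j, (Edge.c j : Edge k) ≠ x → c (.c j) = 0 := by
    intro j hj
    apply hc
    intro hmem
    rcases Set.mem_insert_iff.mp hmem with h | h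
    · exact hj h
    · exact c_not_mem_Hp j h.1
  have hphi := phiBC hk c hsum
  have hcx : c x = 0 := by
    rcases hxbc with ⟨j, rfl⟩ | ⟨j, rfl⟩
    · have h1 : (∑ j', c (.b j')) = c (.b j) := by
        apply Finset.sum_eq_single j
        · exact fun j' _ hj' => hb' j' (by simp [hj'])
        · exact fun h => absurd (Finset.mem_univ _) h
      have h2 : (∑ j', c (.c j')) = 0 :=
        Finset.sum_eq_zero (fun j' _ => hc' j' (by simp))
      rw [h1, h2] at hphi
      exact hphi
    · have h1 : (∑ j', c (.c j')) = c (.c j) := by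
        apply Finset.sum_eq_single j
        · exact fun j' _ hj' => hc' j' (by simp [hj'])
        · exact fun h => absurd (Finset.mem_univ _) h
      have h2 : (∑ j', c (.b j')) = 0 :=
        Finset.sum_eq_zero (fun j' _ => hb' j' (by simp))
      rw [h1, h2] at hphi
      exact hphi.symm
  have hball : ∀ j, c (.b j) = 0 := by
    intro j
    by_cases hj : (Edge.b j : Edge k) = x
    · rw [hj]; exact hcx
    · exact hb' j hj
  have hcall : ∀ j, c (.c j) = 0 := by
    intro j
    by_cases hj : (Edge.c j : Edge k) = x
    · rw [hj]; exact hcx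
    · exact hc' j hj
  apply pAllZero hk c hsum hball hcall
  have hfx : f ≠ x := fun h => hx (h ▸ hf)
  have hcf : c f = 0 := by
    apply hc
    intro hmem
    rcases Set.mem_insert_iff.mp hmem with h | h
    · exact hfx h
    · exact h.2 rfl
  rcases mem_Hp.mp hf with ⟨j, rfl⟩ | ⟨j, rfl⟩ | rfl | rfl
  · exact Or.inr (Or.inr (Or.inl ⟨j, hcf⟩))
  · exact Or.inr (Or.inr (Or.inr ⟨j, hcf⟩))
  · exact Or.inl hcf
  · exact Or.inr (Or.inl hcf)

lemma indepHqInsert (hk : 3 ≤ k) (hodd : Odd k) (hN : IsColMatroid (liftMatrix k) N)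
    {f x : Edge k} (hf : f ∈ Hq k) (hx : x ∉ Hq k) : N.Indep (insert x (Hq k \ {f})) := by
  classical
  rw [myIndepIff hN]
  intro c hc hsum
  have hxad : (∃ j, x = Edge.a j) ∨ (∃ j, x = Edge.d j) := by
    cases x with
    | a j => exact Or.inl ⟨j, rfl⟩
    | b j => exact absurd (mem_Hq.mpr (Or.inl ⟨j, rfl⟩)) hx
    | c j => exact absurd (mem_Hq.mpr (Or.inr (Or.inl ⟨j, rfl⟩))) hx
    | d j => exact Or.inr ⟨j, rfl⟩
    | e1 => exact absurd (mem_Hq.mpr (Or.inr (Or.inr (Or.inl rfl)))) hx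
    | e2 => exact absurd (mem_Hq.mpr (Or.inr (Or.inr (Or.inr rfl)))) hx
  have ha' : ∀ j, (Edge.a j : Edge k) ≠ x → c (.a j) = 0 := by
    intro j hj
    apply hc
    intro hmem
    rcases Set.mem_insert_iff.mp hmem with h | h
    · exact hj h
    · exact a_not_mem_Hq j h.1
  have hd' : ∀ j, (Edge.d j : Edge k) ≠ x → c (.d j) = 0 := by
    intro j hj
    apply hc
    intro hmem
    rcases Set.mem_insert_iff.mp hmem with h | h
    · exact hj h
    · exact d_not_mem_Hq j h.1
  obtain ⟨_, _, _, _, hg⟩ := myRowEqs hk c hsum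
  have hcx : c x = 0 := by
    rcases hxad with ⟨j, rfl⟩ | ⟨j, rfl⟩
    · have h1 : (∑ j', c (.a j')) = c (.a j) := by
        apply Finset.sum_eq_single j
        · exact fun j' _ hj' => ha' j' (by simp [hj'])
        · exact fun h => absurd (Finset.mem_univ _) h
      have h2 : (∑ j', c (.d j')) = 0 :=
        Finset.sum_eq_zero (fun j' _ => hd' j' (by simp))
      rw [h1, h2] at hg
      linarith
    · have h1 : (∑ j', c (.d j')) = c (.d j) := by
        apply Finset.sum_eq_single j
        · exact fun j' _ hj' => hd' j' (by simp [hj'])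
        · exact fun h => absurd (Finset.mem_univ _) h
      have h2 : (∑ j', c (.a j')) = 0 :=
        Finset.sum_eq_zero (fun j' _ => ha' j' (by simp))
      rw [h1, h2] at hg
      linarith
  have haall : ∀ j, c (.a j) = 0 := by
    intro j
    by_cases hj : (Edge.a j : Edge k) = x
    · rw [hj]; exact hcx
    · exact ha' j hj
  have hdall : ∀ j, c (.d j) = 0 := by
    intro j
    by_cases hj : (Edge.d j : Edge k) = x
    · rw [hj]; exact hcx
    · exact hd' j hj
  apply qAllZero hk hodd c hsum haall hdall
  have hfx : f ≠ x := fun h => hx (h ▸ hf)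
  have hcf : c f = 0 := by
    apply hc
    intro hmem
    rcases Set.mem_insert_iff.mp hmem with h | h
    · exact hfx h
    · exact h.2 rfl
  rcases mem_Hq.mp hf with ⟨j, rfl⟩ | ⟨j, rfl⟩ | rfl | rfl
  · exact Or.inr (Or.inr (Or.inl ⟨j, hcf⟩))
  · exact Or.inr (Or.inr (Or.inr ⟨j, hcf⟩))
  · exact Or.inl hcf
  · exact Or.inr (Or.inl hcf)

lemma indepBP (hk : 3 ≤ k) (hN : IsColMatroid (liftMatrix k) N) :
    N.Indep (insert (Edge.b 0) (insert Edge.e1 (Pset k))) := by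
  classical
  rw [myIndepIff hN]
  intro c hc hsum
  have hnotP : ∀ e : Edge k, ((∃ j, e = Edge.a j) ∨ (∃ j, e = Edge.d j)) ∨
      e ∈ ({Edge.b 0, Edge.e1} : Set (Edge k)) → True := fun _ _ => trivial
  have hcc : ∀ j, c (.c j) = 0 := by
    intro j
    apply hc
    intro hmem
    rcases Set.mem_insert_iff.mp hmem with h | h
    · simp at h
    · rcases Set.mem_insert_iff.mp h with h | h
      · simp at h
      · obtain ⟨i, h⟩ := h
        rcases h with h | h <;> simp at h
  have hb' : ∀ j, j ≠ (0 : Fin k) → c (.b j) = 0 := by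
    intro j hj
    apply hc
    intro hmem
    rcases Set.mem_insert_iff.mp hmem with h | h
    · rw [Edge.b.injEq] at h
      exact hj h
    · rcases Set.mem_insert_iff.mp h with h | h
      · simp at h
      · obtain ⟨i, h⟩ := h
        rcases h with h | h <;> simp at h
  have he2 : c .e2 = 0 := by
    apply hc
    intro hmem
    rcases Set.mem_insert_iff.mp hmem with h | h
    · simp at h
    · rcases Set.mem_insert_iff.mp h with h | h
      · simp at h
      · obtain ⟨i, h⟩ := h
        rcases h with h | h <;> simp at h
  have hphi := phiBC hk c hsum
  have h2 : (∑ j', c (.c j')) = 0 := Finset.sum_eq_zero (fun j' _ => hcc j')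
  have h1 : (∑ j', c (.b j')) = c (.b 0) := by
    apply Finset.sum_eq_single 0
    · exact fun j' _ hj' => hb' j' hj'
    · exact fun h => absurd (Finset.mem_univ _) h
  have hb0 : c (.b 0) = 0 := by rw [h1, h2] at hphi; exact hphi
  have hball : ∀ j, c (.b j) = 0 := by
    intro j
    by_cases hj : j = (0 : Fin k)
    · rw [hj]; exact hb0
    · exact hb' j hj
  exact pAllZero hk c hsum hball hcc (Or.inr (Or.inl he2))

lemma indepBQ (hk : 3 ≤ k) (hodd : Odd k) (hN : IsColMatroid (liftMatrix k) N) :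
    N.Indep (insert (Edge.a 0) (insert Edge.e1 (Qset k))) := by
  classical
  rw [myIndepIff hN]
  intro c hc hsum
  have hdd : ∀ j, c (.d j) = 0 := by
    intro j
    apply hc
    intro hmem
    rcases Set.mem_insert_iff.mp hmem with h | h
    · simp at h
    · rcases Set.mem_insert_iff.mp h with h | h
      · simp at h
      · obtain ⟨i, h⟩ := h
        rcases h with h | h <;> simp at h
  have ha' : ∀ j, j ≠ (0 : Fin k) → c (.a j) = 0 := by
    intro j hj
    apply hc
    intro hmem
    rcases Set.mem_insert_iff.mp hmem with h | h
    · rw [Edge.a.injEq] at h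
      exact hj h
    · rcases Set.mem_insert_iff.mp h with h | h
      · simp at h
      · obtain ⟨i, h⟩ := h
        rcases h with h | h <;> simp at h
  have he2 : c .e2 = 0 := by
    apply hc
    intro hmem
    rcases Set.mem_insert_iff.mp hmem with h | h
    · simp at h
    · rcases Set.mem_insert_iff.mp h with h | h
      · simp at h
      · obtain ⟨i, h⟩ := h
        rcases h with h | h <;> simp at h
  obtain ⟨_, _, _, _, hg⟩ := myRowEqs hk c hsum
  have h2 : (∑ j', c (.d j')) = 0 := Finset.sum_eq_zero (fun j' _ => hdd j')
  have h1 : (∑ j', c (.a j')) = c (.a 0) := by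
    apply Finset.sum_eq_single 0
    · exact fun j' _ hj' => ha' j' hj'
    · exact fun h => absurd (Finset.mem_univ _) h
  have ha0 : c (.a 0) = 0 := by rw [h1, h2] at hg; linarith
  have haall : ∀ j, c (.a j) = 0 := by
    intro j
    by_cases hj : j = (0 : Fin k)
    · rw [hj]; exact ha0
    · exact ha' j hj
  exact qAllZero hk hodd c hsum haall hdd (Or.inr (Or.inl he2))

end MyMatroid
section MyCard

open Edge

variable {k : ℕ} [NeZero k] {N : Matroid (Edge k)}

lemma sumTwoIndicator {V : Type} [Fintype V] [DecidableEq V] (s t : V) (h : s ≠ t) :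
    ∑ v : V, (if v = s then (1:ℝ) else if v = t then -1 else 0) = 0 := by
  have key : ∀ v : V, (if v = s then (1:ℝ) else if v = t then -1 else 0)
      = (if v = s then (1:ℝ) else 0) + (if v = t then -1 else 0) := by
    intro v
    by_cases h1 : v = s
    · subst h1; rw [if_pos rfl, if_pos rfl, if_neg h]; ring
    · rw [if_neg h1, if_neg h1]; ring
  rw [Finset.sum_congr rfl (fun v _ => key v), Finset.sum_add_distrib,
    Finset.sum_ite_eq' Finset.univ s (fun _ => (1:ℝ)),
    Finset.sum_ite_eq' Finset.univ t (fun _ => (-1:ℝ)),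
    if_pos (Finset.mem_univ s), if_pos (Finset.mem_univ t)]
  ring

lemma tail_ne_head (hk : 3 ≤ k) (e : Edge k) : e.tail ≠ e.head := by
  have h1 : ∀ j : Fin k, ¬ (j = j + 1) :=
    fun j hh => fin_one_ne_zero hk (left_eq_add.mp hh)
  cases e with
  | a j =>
    dsimp +instances only [Edge.tail, Edge.head]
    by_cases h0 : j + 1 = 0
    · rw [if_pos h0]; simp
    · rw [if_neg h0]; simp [h1 j]
  | b j =>
    dsimp +instances only [Edge.tail, Edge.head]
    by_cases h0 : j + 1 = 0
    · rw [if_pos h0]; simp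
    · rw [if_neg h0]; simp
  | c j =>
    dsimp +instances only [Edge.tail, Edge.head]
    by_cases h0 : j + 1 = 0
    · rw [if_pos h0]; simp
    · rw [if_neg h0]; simp
  | d j =>
    dsimp +instances only [Edge.tail, Edge.head]
    by_cases h0 : j + 1 = 0
    · rw [if_pos h0]; simp
    · rw [if_neg h0]; simp [h1 j]
  | e1 => simp [Edge.tail, Edge.head]
  | e2 => simp [Edge.tail, Edge.head]

lemma myCardBound (hk : 3 ≤ k) (hN : IsColMatroid (liftMatrix k) N) {I : Set (Edge k)}
    (h : N.Indep I) : I.ncard ≤ 2 * k + 2 := by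
  classical
  haveI : Fintype I := I.toFinite.fintype
  have hli : LinearIndependent ℝ (fun e : I => (fun v => liftMatrix k v (e : Edge k))) :=
    (hN.2 I).mp h
  let T : ((Vertex k ⊕ Unit) → ℝ) →ₗ[ℝ] ℝ :=
    { toFun := fun w => ∑ v : Vertex k, w (Sum.inl v)
      map_add' := fun w1 w2 => by simp [Finset.sum_add_distrib]
      map_smul' := fun r w => by simp [Finset.mul_sum, mul_add] }
  have hker : ∀ e : Edge k, (fun v => liftMatrix k v e) ∈ LinearMap.ker T := by
    intro e
    rw [LinearMap.mem_ker]
    show ∑ v : Vertex k, liftMatrix k (Sum.inl v) e = 0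
    have hform : ∀ v : Vertex k, liftMatrix k (Sum.inl v) e
        = (if v = e.tail then (1:ℝ) else if v = e.head then -1 else 0) := fun v => rfl
    rw [Finset.sum_congr rfl (fun v _ => hform v)]
    exact sumTwoIndicator e.tail e.head (tail_ne_head hk e)
  set W := LinearMap.ker T with hW
  let colW : I → W := fun e => ⟨fun v => liftMatrix k v (e : Edge k), hker e⟩
  have hliW : LinearIndependent ℝ colW := LinearIndependent.of_comp W.subtype hli
  have hcard : Fintype.card I ≤ Module.finrank ℝ W := hliW.fintype_card_le_finrank
  have hrk : Module.finrank ℝ (LinearMap.range T) + Module.finrank ℝ W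
      = Module.finrank ℝ ((Vertex k ⊕ Unit) → ℝ) := T.finrank_range_add_finrank_ker
  have hdim : Module.finrank ℝ ((Vertex k ⊕ Unit) → ℝ) = 2 * k + 3 := by
    rw [Module.finrank_fintype_fun_eq_card]
    simp only [Fintype.card_sum, Fintype.card_prod, Fintype.card_fin, Fintype.card_bool,
      Fintype.card_unit]
    omega
  have hTne : T ≠ 0 := by
    intro h0
    have h1 : T (fun r => if r = Sum.inl (Sum.inl ((0 : Fin k), false)) then (1:ℝ) else 0)
        = 0 := by rw [h0]; rfl
    have h2 : T (fun r => if r = Sum.inl (Sum.inl ((0 : Fin k), false)) then (1:ℝ) else 0)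
        = 1 := by
      show ∑ v : Vertex k, (if (Sum.inl v : Vertex k ⊕ Unit)
          = Sum.inl (Sum.inl ((0 : Fin k), false)) then (1:ℝ) else 0) = 1
      have hcond : ∀ v : Vertex k, (if (Sum.inl v : Vertex k ⊕ Unit)
          = Sum.inl (Sum.inl ((0 : Fin k), false)) then (1:ℝ) else 0)
          = (if v = Sum.inl ((0 : Fin k), false) then (1:ℝ) else 0) := by
        intro v
        by_cases hv : v = Sum.inl ((0 : Fin k), false)
        · rw [if_pos (by rw [hv]), if_pos hv]
        · rw [if_neg (by simp [hv]), if_neg hv]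
      rw [Finset.sum_congr rfl (fun v _ => hcond v),
        Finset.sum_ite_eq' Finset.univ _ (fun _ => (1:ℝ)), if_pos (Finset.mem_univ _)]
    rw [h1] at h2
    norm_num at h2
  have hrange : 1 ≤ Module.finrank ℝ (LinearMap.range T) := by
    rw [Nat.one_le_iff_ne_zero, Ne, Submodule.finrank_eq_zero, LinearMap.range_eq_bot]
    exact hTne
  have hIcard : I.ncard = Fintype.card I := by
    rw [Set.ncard_eq_toFinset_card', Set.toFinset_card]
  omega

lemma inj_edge_a : Function.Injective (Edge.a : Fin k → Edge k) := by
  intro x y h; simpa using h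

lemma inj_edge_b : Function.Injective (Edge.b : Fin k → Edge k) := by
  intro x y h; simpa using h

lemma inj_edge_c : Function.Injective (Edge.c : Fin k → Edge k) := by
  intro x y h; simpa using h

lemma inj_edge_d : Function.Injective (Edge.d : Fin k → Edge k) := by
  intro x y h; simpa using h

lemma b0_not_mem : (Edge.b 0 : Edge k) ∉ insert Edge.e1 (Pset k) := by
  intro hmem
  rcases Set.mem_insert_iff.mp hmem with h | ⟨i, h | h⟩ <;> simp at h

lemma a0_not_mem : (Edge.a 0 : Edge k) ∉ insert Edge.e1 (Qset k) := by
  intro hmem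
  rcases Set.mem_insert_iff.mp hmem with h | ⟨i, h | h⟩ <;> simp at h

lemma ncardBP (hk : 3 ≤ k) :
    (insert (Edge.b 0) (insert Edge.e1 (Pset k)) : Set (Edge k)).ncard = 2 * k + 2 := by
  have hP : (Pset k : Set (Edge k))
      = Set.range (Edge.a : Fin k → Edge k) ∪ Set.range Edge.d := by
    ext e
    simp only [Pset, Set.mem_setOf_eq, Set.mem_union, Set.mem_range]
    constructor
    · rintro ⟨i, h | h⟩
      · exact Or.inl ⟨i, h.symm⟩
      · exact Or.inr ⟨i, h.symm⟩
    · rintro (⟨i, h⟩ | ⟨i, h⟩)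
      · exact ⟨i, Or.inl h.symm⟩
      · exact ⟨i, Or.inr h.symm⟩
  have hra : (Set.range (Edge.a : Fin k → Edge k)).ncard = k := by
    rw [← Nat.card_coe_set_eq, Nat.card_range_of_injective inj_edge_a,
      Nat.card_eq_fintype_card, Fintype.card_fin]
  have hrd : (Set.range (Edge.d : Fin k → Edge k)).ncard = k := by
    rw [← Nat.card_coe_set_eq, Nat.card_range_of_injective inj_edge_d,
      Nat.card_eq_fintype_card, Fintype.card_fin]
  have hdisj : Disjoint (Set.range (Edge.a : Fin k → Edge k))
      (Set.range (Edge.d : Fin k → Edge k)) := by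
    rw [Set.disjoint_left]
    rintro x ⟨i, rfl⟩ ⟨j, h⟩
    simp at h
  have hPcard : (Pset k).ncard = 2 * k := by
    rw [hP, Set.ncard_union_eq hdisj (Set.toFinite _) (Set.toFinite _), hra, hrd]
    omega
  have he1P : Edge.e1 ∉ Pset k := by rintro ⟨i, h | h⟩ <;> simp at h
  rw [Set.ncard_insert_of_notMem b0_not_mem (Set.toFinite _),
    Set.ncard_insert_of_notMem he1P (Set.toFinite _), hPcard]

lemma ncardBQ (hk : 3 ≤ k) :
    (insert (Edge.a 0) (insert Edge.e1 (Qset k)) : Set (Edge k)).ncard = 2 * k + 2 := by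
  have hQ : (Qset k : Set (Edge k))
      = Set.range (Edge.b : Fin k → Edge k) ∪ Set.range Edge.c := by
    ext e
    simp only [Qset, Set.mem_setOf_eq, Set.mem_union, Set.mem_range]
    constructor
    · rintro ⟨i, h | h⟩
      · exact Or.inl ⟨i, h.symm⟩
      · exact Or.inr ⟨i, h.symm⟩
    · rintro (⟨i, h⟩ | ⟨i, h⟩)
      · exact ⟨i, Or.inl h.symm⟩
      · exact ⟨i, Or.inr h.symm⟩
  have hrb : (Set.range (Edge.b : Fin k → Edge k)).ncard = k := by
    rw [← Nat.card_coe_set_eq, Nat.card_range_of_injective inj_edge_b,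
      Nat.card_eq_fintype_card, Fintype.card_fin]
  have hrc : (Set.range (Edge.c : Fin k → Edge k)).ncard = k := by
    rw [← Nat.card_coe_set_eq, Nat.card_range_of_injective inj_edge_c,
      Nat.card_eq_fintype_card, Fintype.card_fin]
  have hdisj : Disjoint (Set.range (Edge.b : Fin k → Edge k))
      (Set.range (Edge.c : Fin k → Edge k)) := by
    rw [Set.disjoint_left]
    rintro x ⟨i, rfl⟩ ⟨j, h⟩
    simp at h
  have hQcard : (Qset k).ncard = 2 * k := by
    rw [hQ, Set.ncard_union_eq hdisj (Set.toFinite _) (Set.toFinite _), hrb, hrc]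
    omega
  have he1Q : Edge.e1 ∉ Qset k := by rintro ⟨i, h | h⟩ <;> simp at h
  rw [Set.ncard_insert_of_notMem a0_not_mem (Set.toFinite _),
    Set.ncard_insert_of_notMem he1Q (Set.toFinite _), hQcard]

lemma myBase (hk : 3 ≤ k) (hN : IsColMatroid (liftMatrix k) N) {B : Set (Edge k)}
    (hind : N.Indep B) (hcard : B.ncard = 2 * k + 2) : N.IsBase B := by
  rw [Matroid.isBase_iff_maximal_indep]
  refine ⟨hind, fun J hJ hBJ => ?_⟩
  have hle := myCardBound hk hN hJ
  have : B = J := Set.eq_of_subset_of_ncard_le hBJ (by omega) (Set.toFinite _)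
  rw [this]

end MyCard
section MyFinal

open Edge

variable {k : ℕ} [NeZero k] {N : Matroid (Edge k)}

lemma a_mem_Pset (j : Fin k) : Edge.a j ∈ Pset k := (show ∃ i, _ from ⟨j, Or.inl rfl⟩)
lemma d_mem_Pset (j : Fin k) : Edge.d j ∈ Pset k := (show ∃ i, _ from ⟨j, Or.inr rfl⟩)
lemma b_mem_Qset (j : Fin k) : Edge.b j ∈ Qset k := (show ∃ i, _ from ⟨j, Or.inl rfl⟩)
lemma c_mem_Qset (j : Fin k) : Edge.c j ∈ Qset k := (show ∃ i, _ from ⟨j, Or.inr rfl⟩)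

lemma myBasisP (hk : 3 ≤ k) (hN : IsColMatroid (liftMatrix k) N) :
    N.IsBasis (insert Edge.e1 (Pset k)) (Hp k) := by
  rw [Matroid.isBasis_iff (show Hp k ⊆ N.E by rw [hN.1]; exact Set.subset_univ _)]
  refine ⟨(indepBP hk hN).subset (Set.subset_insert _ _), ?_, ?_⟩
  · intro e he
    rcases Set.mem_insert_iff.mp he with rfl | h
    · exact mem_Hp.mpr (Or.inr (Or.inr (Or.inl rfl)))
    · exact Set.mem_union_left _ h
  · intro J hJ hIJ hJH
    by_contra hne
    obtain ⟨x, hxJ, hxI⟩ := Set.exists_of_ssubset (hIJ.ssubset_of_ne hne)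
    have hx2 : x = Edge.e2 := by
      rcases mem_Hp.mp (hJH hxJ) with ⟨j, rfl⟩ | ⟨j, rfl⟩ | rfl | rfl
      · exact absurd (Set.mem_insert_of_mem _ (a_mem_Pset j)) hxI
      · exact absurd (Set.mem_insert_of_mem _ (d_mem_Pset j)) hxI
      · exact absurd (Set.mem_insert _ _) hxI
      · rfl
    have hHJ : Hp k ⊆ J := by
      intro y hy
      rcases mem_Hp.mp hy with ⟨j, rfl⟩ | ⟨j, rfl⟩ | rfl | rfl
      · exact hIJ (Set.mem_insert_of_mem _ (a_mem_Pset j))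
      · exact hIJ (Set.mem_insert_of_mem _ (d_mem_Pset j))
      · exact hIJ (Set.mem_insert _ _)
      · exact hx2 ▸ hxJ
    exact (depHp hk hN).1 ((Set.Subset.antisymm hJH hHJ) ▸ hJ)

lemma myBasisQ (hk : 3 ≤ k) (hodd : Odd k) (hN : IsColMatroid (liftMatrix k) N) :
    N.IsBasis (insert Edge.e1 (Qset k)) (Hq k) := by
  rw [Matroid.isBasis_iff (show Hq k ⊆ N.E by rw [hN.1]; exact Set.subset_univ _)]
  refine ⟨(indepBQ hk hodd hN).subset (Set.subset_insert _ _), ?_, ?_⟩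
  · intro e he
    rcases Set.mem_insert_iff.mp he with rfl | h
    · exact mem_Hq.mpr (Or.inr (Or.inr (Or.inl rfl)))
    · exact Set.mem_union_left _ h
  · intro J hJ hIJ hJH
    by_contra hne
    obtain ⟨x, hxJ, hxI⟩ := Set.exists_of_ssubset (hIJ.ssubset_of_ne hne)
    have hx2 : x = Edge.e2 := by
      rcases mem_Hq.mp (hJH hxJ) with ⟨j, rfl⟩ | ⟨j, rfl⟩ | rfl | rfl
      · exact absurd (Set.mem_insert_of_mem _ (b_mem_Qset j)) hxI
      · exact absurd (Set.mem_insert_of_mem _ (c_mem_Qset j)) hxI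
      · exact absurd (Set.mem_insert _ _) hxI
      · rfl
    have hHJ : Hq k ⊆ J := by
      intro y hy
      rcases mem_Hq.mp hy with ⟨j, rfl⟩ | ⟨j, rfl⟩ | rfl | rfl
      · exact hIJ (Set.mem_insert_of_mem _ (b_mem_Qset j))
      · exact hIJ (Set.mem_insert_of_mem _ (c_mem_Qset j))
      · exact hIJ (Set.mem_insert _ _)
      · exact hx2 ▸ hxJ
    exact (depHq hk hN).1 ((Set.Subset.antisymm hJH hHJ) ▸ hJ)

lemma myFlatP (hk : 3 ≤ k) (hN : IsColMatroid (liftMatrix k) N) : N.IsFlat (Hp k) := by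
  constructor
  · intro I X hIH hIX x hxX
    by_contra hxH
    have hIHp : I ⊆ Hp k := hIH.subset
    have hne : I ≠ Hp k := fun h => (depHp hk hN).1 (h ▸ hIH.indep)
    obtain ⟨f, hfH, hfI⟩ := Set.exists_of_ssubset (hIHp.ssubset_of_ne hne)
    have hIeq : I = Hp k \ {f} :=
      hIH.eq_of_subset_indep (indepHpDiff hk hN hfH)
        (Set.subset_diff_singleton hIHp hfI) Set.diff_subset
    have hins : N.Indep (insert x I) := by
      rw [hIeq]; exact indepHpInsert hk hN hfH hxH
    have hIx : I = insert x I :=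
      hIX.eq_of_subset_indep hins (Set.subset_insert _ _)
        (Set.insert_subset hxX hIX.subset)
    exact hxH (hIHp (hIx ▸ Set.mem_insert x I))
  · rw [hN.1]; exact Set.subset_univ _

lemma myFlatQ (hk : 3 ≤ k) (hodd : Odd k) (hN : IsColMatroid (liftMatrix k) N) :
    N.IsFlat (Hq k) := by
  constructor
  · intro I X hIH hIX x hxX
    by_contra hxH
    have hIHq : I ⊆ Hq k := hIH.subset
    have hne : I ≠ Hq k := fun h => (depHq hk hN).1 (h ▸ hIH.indep)
    obtain ⟨f, hfH, hfI⟩ := Set.exists_of_ssubset (hIHq.ssubset_of_ne hne)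
    have hIeq : I = Hq k \ {f} :=
      hIH.eq_of_subset_indep (indepHqDiff hk hodd hN hfH)
        (Set.subset_diff_singleton hIHq hfI) Set.diff_subset
    have hins : N.Indep (insert x I) := by
      rw [hIeq]; exact indepHqInsert hk hodd hN hfH hxH
    have hIx : I = insert x I :=
      hIX.eq_of_subset_indep hins (Set.subset_insert _ _)
        (Set.insert_subset hxX hIX.subset)
    exact hxH (hIHq (hIx ▸ Set.mem_insert x I))
  · rw [hN.1]; exact Set.subset_univ _

end MyFinal

/-- Both `P ∪ {e_1, e_2}` and `Q ∪ {e_1, e_2}` are circuit-hyperplanes of `N_k^L`. -/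
theorem circuit_hyperplanes_of_NkL (k : ℕ) [NeZero k] (hk : 3 ≤ k) (hodd : Odd k)
    (N : Matroid (Edge k)) (hN : IsColMatroid (liftMatrix k) N) :
    N.IsCircuitHyperplane (Pset k ∪ {Edge.e1, Edge.e2}) ∧
    N.IsCircuitHyperplane (Qset k ∪ {Edge.e1, Edge.e2}) := by
  constructor
  · refine ⟨⟨depHp hk hN, fun D hD => ?_⟩,
      myFlatP hk hN,
      insert Edge.e1 (Pset k), insert (Edge.b 0) (insert Edge.e1 (Pset k)),
      myBasisP hk hN, myBase hk hN (indepBP hk hN) (ncardBP hk),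
      (Set.encard_insert_of_notMem b0_not_mem).symm⟩
    obtain ⟨f, hf, hfD⟩ := Set.exists_of_ssubset hD
    exact (indepHpDiff hk hN hf).subset (Set.subset_diff_singleton hD.subset hfD)
  · refine ⟨⟨depHq hk hN, fun D hD => ?_⟩,
      myFlatQ hk hodd hN,
      insert Edge.e1 (Qset k), insert (Edge.a 0) (insert Edge.e1 (Qset k)),
      myBasisQ hk hodd hN, myBase hk hN (indepBQ hk hodd hN) (ncardBQ hk),
      (Set.encard_insert_of_notMem a0_not_mem).symm⟩
    obtain ⟨f, hf, hfD⟩ := Set.exists_of_ssubset hD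
    exact (indepHqDiff hk hodd hN hf).subset (Set.subset_diff_singleton hD.subset hfD)
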